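/- (Dunkl, Heckman.) Let W ⊂ O(ℝ^r) be a finite real reflection group with reflections S, roots α_s, and conjugation-invariant parameters c : S → ℂ, and let e_1,…,e_r be the standard orthonormal basis of ℝ^r. Then for every W-invariant rational function f ∈ ℂ(x_1,…,x_r) one has Σ_{i=1}^r D_{e_i}^2 f = Δf − Σ_{s∈S} c_s · ((α_s,α_s)/α_s) · ∂_{α_s^∨} f, where Δ = Σ_i ∂_{e_i}^2 is the Laplacian, α_s^∨ = 2α_s/(α_s,α_s), and α_s also denotes the linear function x ↦ (α_s, x). -/

import Mathlib

open MvPolynomial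

noncomputable section

/-- The matrix underlying an element of a subgroup of `GL_r(ℝ)`. -/
def matOfR {r : ℕ} {W : Subgroup (Matrix.GeneralLinearGroup (Fin r) ℝ)} (w : W) :
    Matrix (Fin r) (Fin r) ℝ :=
  ((w : Matrix.GeneralLinearGroup (Fin r) ℝ) : Matrix (Fin r) (Fin r) ℝ)

/-- The complexified linear polynomial `Σᵢ aᵢ xᵢ` with real coefficient vector `a`. -/
def linFormR {r : ℕ} (a : Fin r → ℝ) : MvPolynomial (Fin r) ℂ :=
  ∑ i, MvPolynomial.C ((a i : ℂ)) * MvPolynomial.X i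

/-- The Dunkl operator `D_a` of a real reflection group on `K = ℂ(x₁,…,x_r)`:
`D_a f = ∂_a f − Σ_{s∈S} c_s (α_s, a) (f − s·f)/α_s`. -/
def dunklR (r : ℕ) (K : Type) [Field K] [Algebra ℂ K]
    [Algebra (MvPolynomial (Fin r) ℂ) K] [IsScalarTower ℂ (MvPolynomial (Fin r) ℂ) K]
    {W : Subgroup (Matrix.GeneralLinearGroup (Fin r) ℝ)}
    (S : Finset W) (c : W → ℂ) (α : W → Fin r → ℝ)
    (ρ : W →* (K ≃ₐ[ℂ] K)) (pd : Fin r → Derivation ℂ K K)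
    (a : Fin r → ℝ) : K →ₗ[ℂ] K :=
  (∑ i, (a i : ℂ) • (pd i).toLinearMap)
    - ∑ s ∈ S, (c s * (((∑ i, α s i * a i : ℝ) : ℂ))) •
        ((LinearMap.mulLeft ℂ
            ((algebraMap (MvPolynomial (Fin r) ℂ) K (linFormR (α s)))⁻¹)).comp
          (LinearMap.id - (ρ s).toLinearMap))

section Aux

lemma Derivation.sumApply {R A M : Type*} [CommSemiring R] [CommSemiring A] [Algebra R A]
    [AddCommMonoid M] [Module A M] [Module R M] {ι : Type*} (s : Finset ι)
    (D : ι → Derivation R A M) (a : A) : (∑ j ∈ s, D j) a = ∑ j ∈ s, D j a := by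
  classical
  induction s using Finset.induction with
  | empty => simp
  | insert a s h ih => simp [Finset.sum_insert h, Derivation.add_apply, ih]

def conjDeriv {K : Type} [Field K] [Algebra ℂ K] (e : K ≃ₐ[ℂ] K)
    (D : Derivation ℂ K K) : Derivation ℂ K K where
  toLinearMap := e.toLinearMap ∘ₗ D.toLinearMap ∘ₗ e.symm.toLinearMap
  map_one_eq_zero' := by simp
  leibniz' a b := by
    simp only [LinearMap.coe_comp, Function.comp_apply, AlgEquiv.toLinearMap_apply,
      Derivation.coeFn_coe, map_mul, Derivation.leibniz, map_add, smul_eq_mul,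
      AlgEquiv.apply_symm_apply]

@[simp] lemma conjDeriv_apply {K : Type} [Field K] [Algebra ℂ K] (e : K ≃ₐ[ℂ] K)
    (D : Derivation ℂ K K) (x : K) : conjDeriv e D x = e (D (e.symm x)) := rfl

variable (r : ℕ) (K : Type) [Field K] [Algebra ℂ K]
    [Algebra (MvPolynomial (Fin r) ℂ) K] [IsScalarTower ℂ (MvPolynomial (Fin r) ℂ) K]
    [IsFractionRing (MvPolynomial (Fin r) ℂ) K]

theorem deriv_ext (D₁ D₂ : Derivation ℂ K K)
    (h : ∀ i : Fin r, D₁ (algebraMap (MvPolynomial (Fin r) ℂ) K (X i))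
        = D₂ (algebraMap (MvPolynomial (Fin r) ℂ) K (X i))) :
    ∀ f : K, D₁ f = D₂ f := by
  have hpoly : ∀ p : MvPolynomial (Fin r) ℂ,
      D₁ (algebraMap (MvPolynomial (Fin r) ℂ) K p) = D₂ (algebraMap (MvPolynomial (Fin r) ℂ) K p) := by
    intro p
    induction p using MvPolynomial.induction_on with
    | C a =>
      have : algebraMap (MvPolynomial (Fin r) ℂ) K (C a) = algebraMap ℂ K a := by
        rw [show (C a : MvPolynomial (Fin r) ℂ) = algebraMap ℂ (MvPolynomial (Fin r) ℂ) a from rfl,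
          ← IsScalarTower.algebraMap_apply]
      rw [this, Derivation.map_algebraMap, Derivation.map_algebraMap]
    | add p q hp hq => rw [map_add, map_add, map_add, hp, hq]
    | mul_X p i hp => rw [map_mul, Derivation.leibniz, Derivation.leibniz, hp, h]
  intro f
  obtain ⟨p, q, hq, hf⟩ := IsFractionRing.div_surjective (A := MvPolynomial (Fin r) ℂ) f
  have hq0 : algebraMap (MvPolynomial (Fin r) ℂ) K q ≠ 0 :=
    IsFractionRing.to_map_ne_zero_of_mem_nonZeroDivisors hq
  have hfq : f * algebraMap (MvPolynomial (Fin r) ℂ) K q = algebraMap (MvPolynomial (Fin r) ℂ) K p := by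
    rw [← hf]; field_simp
  have h1 := congrArg D₁ hfq
  have h2 := congrArg D₂ hfq
  rw [Derivation.leibniz, smul_eq_mul, smul_eq_mul] at h1 h2
  rw [hpoly p, hpoly q] at h1
  exact mul_left_cancel₀ hq0 (add_left_cancel (h1.trans h2.symm))


variable {W : Subgroup (Matrix.GeneralLinearGroup (Fin r) ℝ)}

theorem conj_pd (ρ : W →* (K ≃ₐ[ℂ] K))
    (hρ : ∀ (w : W) (i : Fin r),
      ρ w (algebraMap (MvPolynomial (Fin r) ℂ) K (MvPolynomial.X i)) =
        algebraMap (MvPolynomial (Fin r) ℂ) K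
          (∑ j, MvPolynomial.C ((matOfR w⁻¹ i j : ℂ)) * MvPolynomial.X j))
    (pd : Fin r → Derivation ℂ K K)
    (hpd : ∀ (i : Fin r) (q : MvPolynomial (Fin r) ℂ),
      pd i (algebraMap (MvPolynomial (Fin r) ℂ) K q)
        = algebraMap (MvPolynomial (Fin r) ℂ) K (MvPolynomial.pderiv i q))
    (w : W) (i : Fin r) (g : K) :
    ρ w (pd i ((ρ w).symm g)) = ∑ j, (matOfR w j i : ℂ) • pd j g := by
  have key : ∀ x : K, conjDeriv (ρ w) (pd i) x
      = (∑ j, ((matOfR w j i : ℂ) • pd j : Derivation ℂ K K)) x := by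
    refine deriv_ext r K _ _ (fun k => ?_)
    have hsymm : (ρ w).symm = ρ w⁻¹ := by rw [map_inv]; rfl
    rw [conjDeriv_apply, hsymm, hρ w⁻¹ k, inv_inv, hpd]
    rw [Derivation.sumApply]
    simp only [map_sum, pderiv_mul, pderiv_C, zero_mul, pderiv_X, zero_add,
      Derivation.smul_apply, hpd]
    simp only [Pi.single_apply, Algebra.algebraMap_eq_smul_one, mul_ite, mul_one, mul_zero,
      ite_smul, zero_smul, smul_ite, smul_zero, apply_ite (ρ w), map_zero,
      Finset.sum_ite_eq, Finset.sum_ite_eq', Finset.mem_univ, if_true]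
    have hC : (C ((matOfR w k i : ℝ) : ℂ) : MvPolynomial (Fin r) ℂ) • (1 : K)
        = algebraMap ℂ K ((matOfR w k i : ℝ) : ℂ) := by
      rw [Algebra.smul_def, mul_one,
        IsScalarTower.algebraMap_apply ℂ (MvPolynomial (Fin r) ℂ) K]
      rfl
    simp only [hC, AlgEquiv.commutes, Algebra.algebraMap_eq_smul_one]
    rw [map_smul, map_one, one_smul]

  rw [← conjDeriv_apply, key g, Derivation.sumApply]
  simp [Derivation.smul_apply]

end Aux

/-- **Dunkl, Heckman.**  Let `W ⊆ O(ℝ^r)` be a finite real reflection group with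
reflections `S`, roots `α_s`, and conjugation-invariant parameters `c`, acting on
`K = ℂ(x₁,…,x_r)`.  Then for every `W`-invariant rational function `f`,
`Σᵢ D_{eᵢ}² f = Δf − Σ_{s∈S} c_s ((α_s,α_s)/α_s) ∂_{α_s^∨} f`, where `eᵢ` is the standard
orthonormal basis, `Δ = Σᵢ ∂ᵢ²`, and `α_s^∨ = 2α_s/(α_s,α_s)`. -/
theorem dunkl_squares_restrict_to_invariants (r : ℕ) (hr : 1 ≤ r)
    (K : Type) [Field K] [Algebra ℂ K]
    [Algebra (MvPolynomial (Fin r) ℂ) K] [IsScalarTower ℂ (MvPolynomial (Fin r) ℂ) K]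
    [IsFractionRing (MvPolynomial (Fin r) ℂ) K]
    (W : Subgroup (Matrix.GeneralLinearGroup (Fin r) ℝ)) [Finite W]
    (hOrth : ∀ w : W, (Matrix.transpose (matOfR w)) * matOfR w = 1)
    (S : Finset W)
    (hS : ∀ s : W, s ∈ S ↔
      Matrix.rank ((1 : Matrix (Fin r) (Fin r) ℝ) - matOfR s) = 1)
    (α : W → Fin r → ℝ)
    (hα : ∀ s ∈ S, α s ≠ 0)
    (hrefl : ∀ s ∈ S, ∀ v : Fin r → ℝ,
      Matrix.mulVec (matOfR s) v
        = v - (2 * (∑ i, α s i * v i) / (∑ i, α s i * α s i)) • α s)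
    (c : W → ℂ)
    (hc : ∀ (g s : W), s ∈ S → c (g * s * g⁻¹) = c s)
    (ρ : W →* (K ≃ₐ[ℂ] K))
    (hρ : ∀ (w : W) (i : Fin r),
      ρ w (algebraMap (MvPolynomial (Fin r) ℂ) K (MvPolynomial.X i)) =
        algebraMap (MvPolynomial (Fin r) ℂ) K
          (∑ j, MvPolynomial.C ((matOfR w⁻¹ i j : ℂ)) * MvPolynomial.X j))
    (pd : Fin r → Derivation ℂ K K)
    (hpd : ∀ (i : Fin r) (q : MvPolynomial (Fin r) ℂ),
      pd i (algebraMap (MvPolynomial (Fin r) ℂ) K q)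
        = algebraMap (MvPolynomial (Fin r) ℂ) K (MvPolynomial.pderiv i q)) :
    ∀ f : K, (∀ w : W, ρ w f = f) →
      (∑ i, dunklR r K S c α ρ pd (Pi.single i 1)
          (dunklR r K S c α ρ pd (Pi.single i 1) f))
        = (∑ i, pd i (pd i f))
          - ∑ s ∈ S, (c s * (((∑ i, α s i * α s i : ℝ) : ℂ))) •
              ((algebraMap (MvPolynomial (Fin r) ℂ) K (linFormR (α s)))⁻¹ *
                ∑ i, (((2 / (∑ j, α s j * α s j)) * α s i : ℝ) : ℂ) • pd i f) := by
  intro f hf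
  set L : W → K := fun s => (algebraMap (MvPolynomial (Fin r) ℂ) K (linFormR (α s)))⁻¹ with hL
  -- single-coordinate pairing
  have hsingle : ∀ (s : W) (i : Fin r), (∑ k, α s k * (Pi.single i 1 : Fin r → ℝ) k) = α s i := by
    intro s i
    simp [Pi.single_apply, mul_ite, mul_one, mul_zero]
  -- Step A : D_{e_i} f = ∂_i f
  have hA : ∀ i : Fin r, dunklR r K S c α ρ pd (Pi.single i 1) f = pd i f := by
    intro i
    simp only [dunklR, LinearMap.sub_apply, LinearMap.sum_apply, LinearMap.smul_apply,
      LinearMap.coe_comp, Function.comp_apply, LinearMap.mulLeft_apply,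
      LinearMap.id_coe, id_eq, AlgEquiv.toLinearMap_apply, Derivation.coeFn_coe,
      hf, sub_self, mul_zero, smul_zero, Finset.sum_const_zero, sub_zero]
    simp [Pi.single_apply, apply_ite (fun x : ℝ => (x : ℂ)), ite_smul]
  -- Step B : D_{e_i} (∂_i f)
  have hB : ∀ i : Fin r, dunklR r K S c α ρ pd (Pi.single i 1) (pd i f)
      = pd i (pd i f) - ∑ s ∈ S, (c s * ((α s i : ℝ) : ℂ)) •
          (L s * (pd i f - ρ s (pd i f))) := by
    intro i
    simp only [dunklR, LinearMap.sub_apply, LinearMap.sum_apply, LinearMap.smul_apply,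
      LinearMap.coe_comp, Function.comp_apply, LinearMap.mulLeft_apply,
      LinearMap.id_coe, id_eq, AlgEquiv.toLinearMap_apply, Derivation.coeFn_coe, hsingle, hL]
    congr 1
    simp [Pi.single_apply, apply_ite (fun x : ℝ => (x : ℂ)), ite_smul]
  calc (∑ i, dunklR r K S c α ρ pd (Pi.single i 1)
          (dunklR r K S c α ρ pd (Pi.single i 1) f))
      = ∑ i, (pd i (pd i f) - ∑ s ∈ S, (c s * ((α s i : ℝ) : ℂ)) •
          (L s * (pd i f - ρ s (pd i f)))) := by
        refine Finset.sum_congr rfl fun i _ => ?_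
        rw [hA, hB]
    _ = (∑ i, pd i (pd i f)) - ∑ s ∈ S, ∑ i, (c s * ((α s i : ℝ) : ℂ)) •
          (L s * (pd i f - ρ s (pd i f))) := by
        rw [Finset.sum_sub_distrib, Finset.sum_comm]
    _ = _ := by
        congr 1
        refine Finset.sum_congr rfl fun s hs => ?_
        -- notation
        set Q : ℝ := ∑ j, α s j * α s j with hQdef
        have hQpos : 0 < Q := by
          obtain ⟨i0, hi0⟩ := Function.ne_iff.1 (hα s hs)
          have : (0:ℝ) < α s i0 * α s i0 := by
            have := mul_self_nonneg (α s i0)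
            rcases this.lt_or_eq with h | h
            · exact h
            · exact absurd (by nlinarith [mul_self_eq_zero.1 h.symm] : α s i0 = 0) hi0
          exact lt_of_lt_of_le this (Finset.single_le_sum
            (fun j _ => mul_self_nonneg (α s j)) (Finset.mem_univ i0))
        have hQ0 : Q ≠ 0 := ne_of_gt hQpos
        -- reflection sends α to -α
        have hmv : ∀ j, (∑ i, matOfR s j i * α s i) = - α s j := by
          intro j
          have h1 := congrFun (hrefl s hs (α s)) j
          have h2 : (2 * (∑ i, α s i * α s i) / Q) = 2 := by
            rw [← hQdef, mul_div_assoc, div_self hQ0, mul_one]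
          rw [Matrix.mulVec, dotProduct] at h1
          simp only [Pi.sub_apply, Pi.smul_apply, smul_eq_mul, ← hQdef, h2] at h1
          rw [h1, mul_div_assoc, div_self hQ0]; ring
        -- ρ s flips the α-directional derivative of f
        set u : K := ∑ i, ((α s i : ℝ) : ℂ) • pd i f with hu
        have hneg : ∑ i, ((α s i : ℝ) : ℂ) • ρ s (pd i f) = - u := by
          have hfix : (ρ s).symm f = f := by
            conv_lhs => rw [← hf s]
            exact (ρ s).symm_apply_apply f
          have hterm : ∀ i : Fin r, ρ s (pd i f)
              = ∑ j, ((matOfR s j i : ℝ) : ℂ) • pd j f := by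
            intro i
            conv_lhs => rw [← hfix]
            exact conj_pd r K ρ hρ pd hpd s i f
          calc ∑ i, ((α s i : ℝ) : ℂ) • ρ s (pd i f)
              = ∑ i, ∑ j, (((α s i * matOfR s j i : ℝ)) : ℂ) • pd j f := by
                refine Finset.sum_congr rfl fun i _ => ?_
                rw [hterm, Finset.smul_sum]
                refine Finset.sum_congr rfl fun j _ => ?_
                rw [smul_smul]
                norm_cast
            _ = ∑ j, (((∑ i, matOfR s j i * α s i : ℝ)) : ℂ) • pd j f := by
                rw [Finset.sum_comm]
                refine Finset.sum_congr rfl fun j _ => ?_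
                rw [← Finset.sum_smul]
                congr 1
                push_cast
                refine Finset.sum_congr rfl fun i _ => ?_
                ring
            _ = - u := by
                simp only [hmv, hu, ← Finset.sum_neg_distrib]
                refine Finset.sum_congr rfl fun j _ => ?_
                push_cast
                rw [neg_smul]
        -- both sides equal c s • (L s * ((2:ℂ) • u))
        have lhs_eq : ∑ i, (c s * ((α s i : ℝ) : ℂ)) • (L s * (pd i f - ρ s (pd i f)))
            = c s • (L s * ((2:ℂ) • u)) := by
          have : ∀ i : Fin r, (c s * ((α s i : ℝ) : ℂ)) • (L s * (pd i f - ρ s (pd i f)))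
              = c s • (L s * (((α s i : ℝ) : ℂ) • (pd i f - ρ s (pd i f)))) := by
            intro i
            rw [mul_smul, mul_smul_comm]
          rw [Finset.sum_congr rfl fun i _ => this i, ← Finset.smul_sum, ← Finset.mul_sum]
          congr 2
          have : ∑ i, ((α s i : ℝ) : ℂ) • (pd i f - ρ s (pd i f))
              = u - ∑ i, ((α s i : ℝ) : ℂ) • ρ s (pd i f) := by
            rw [← Finset.sum_sub_distrib]
            refine Finset.sum_congr rfl fun i _ => smul_sub _ _ _
          rw [this, hneg, sub_neg_eq_add, two_smul]
        have rhs_eq : (c s * ((Q : ℝ) : ℂ)) • (L s * ∑ i, (((2 / Q) * α s i : ℝ) : ℂ) • pd i f)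
            = c s • (L s * ((2:ℂ) • u)) := by
          have hsum : ((Q : ℝ) : ℂ) • (∑ i, (((2 / Q) * α s i : ℝ) : ℂ) • pd i f)
              = (2:ℂ) • u := by
            rw [hu, Finset.smul_sum, Finset.smul_sum]
            refine Finset.sum_congr rfl fun i _ => ?_
            rw [smul_smul, smul_smul]
            congr 1
            have hQ0c : ((Q : ℝ) : ℂ) ≠ 0 := by exact_mod_cast hQ0
            push_cast
            field_simp
          rw [mul_smul,
            show ((Q : ℝ) : ℂ) • (L s * ∑ i, (((2 / Q) * α s i : ℝ) : ℂ) • pd i f)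
              = L s * (((Q : ℝ) : ℂ) • ∑ i, (((2 / Q) * α s i : ℝ) : ℂ) • pd i f)
              from (mul_smul_comm _ _ _).symm, hsum]
        rw [lhs_eq, ← rhs_eq]


end
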